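/- Let (x,z) be a feasible, half-integral, fully reduced well structured solution to Forest-BCR, and let v ∈ V∖R be a Steiner vertex (a non-terminal) with ∑_{r∈V}(∑_{e∈δ⁺({v})} x^r_e + ∑_{e∈δ⁻({v})} x^r_e) > 0. Then ∑_{r∈V}(∑_{e∈δ⁺({v})} x^r_e + ∑_{e∈δ⁻({v})} x^r_e) ≥ 3/2. -/
import Mathlib


open Finset

noncomputable section

variable {V : Type*}

/-- The set of terminals: vertices occurring in some pair of `P`. -/
def terminals [Fintype V] [DecidableEq V] (P : Finset (Finset V)) : Finset V :=
  Finset.univ.filter fun v => ∃ p ∈ P, v ∈ p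

/-- Feasibility for the Forest-BCR linear program: `x r u v` is the value of the
variable `x^r_{(u,v)}` and `z r p` is the value of `z^r_P`. -/
def ForestBCRFeasible [Fintype V] [DecidableEq V] (P : Finset (Finset V))
    (x : V → V → V → ℝ) (z : V → Finset V → ℝ) : Prop :=
  (∀ r u v : V, u ≠ v → 0 ≤ x r u v) ∧
  (∀ r : V, ∀ p ∈ P, 0 ≤ z r p) ∧
  (∀ p ∈ P, ∑ r : V, z r p = 1) ∧
  (∀ r : V, ∀ p ∈ P, ∀ U : Finset V, r ∉ U → (p ∩ U).Nonempty →
    z r p ≤ ∑ u ∈ U, ∑ v ∈ Uᶜ, x r u v)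

/-- The cost `c(x)` of a Forest-BCR solution. -/
def bcrCost [Fintype V] [DecidableEq V] (c : V → V → ℝ) (x : V → V → V → ℝ) : ℝ :=
  ∑ r : V, ∑ u : V, ∑ v ∈ Finset.univ.erase u, c u v * x r u v

/-- Half-integrality of a Forest-BCR solution. -/
def HalfIntegralSol [Fintype V] [DecidableEq V] (P : Finset (Finset V))
    (x : V → V → V → ℝ) (z : V → Finset V → ℝ) : Prop :=
  (∀ r u v : V, u ≠ v → ∃ n : ℤ, x r u v = n / 2) ∧
  (∀ r : V, ∀ p ∈ P, ∃ n : ℤ, z r p = n / 2)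

/-- The solution `x` is supported on the graph `G`. -/
def SupportedOn (G : SimpleGraph V) (x : V → V → V → ℝ) : Prop :=
  ∀ r u v : V, u ≠ v → ¬ G.Adj u v → x r u v = 0

/-- The splitting-off operation at root `r`: decrease `x^r_{(u,v)}` and `x^r_{(v,w)}`
by `ε` and increase `x^r_{(u,w)}` by `ε`. -/
def splitOff [DecidableEq V] (x : V → V → V → ℝ) (r u v w : V) (ε : ℝ) :
    V → V → V → ℝ :=
  fun r' a b =>
    if r' = r then
      x r' a b + (if a = u ∧ b = w then ε else 0)
        - (if a = u ∧ b = v then ε else 0) - (if a = v ∧ b = w then ε else 0)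
    else x r' a b

/-- Decreasing the single variable `x^r_{(u,v)}` by `ε`. -/
def reduceOne [DecidableEq V] (x : V → V → V → ℝ) (r u v : V) (ε : ℝ) :
    V → V → V → ℝ :=
  fun r' a b => if r' = r ∧ a = u ∧ b = v then x r' a b - ε else x r' a b

/-- A Forest-BCR solution is well structured if all roots with positive `z` are
terminals and no splitting-off operation preserves feasibility. -/
def WellStructured [Fintype V] [DecidableEq V] (P : Finset (Finset V))
    (x : V → V → V → ℝ) (z : V → Finset V → ℝ) : Prop :=
  (∀ r : V, r ∉ terminals P → ∀ p ∈ P, z r p = 0) ∧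
  (∀ r u v w : V, u ≠ v → v ≠ w → u ≠ w → ∀ ε : ℝ, 0 < ε →
    ¬ ForestBCRFeasible P (splitOff x r u v w ε) z)

/-- A Forest-BCR solution is fully reduced if it is well structured and no single
variable `x^r_e` can be decreased while preserving feasibility. -/
def FullyReduced [Fintype V] [DecidableEq V] (P : Finset (Finset V))
    (x : V → V → V → ℝ) (z : V → Finset V → ℝ) : Prop :=
  WellStructured P x z ∧
  ∀ r u v : V, u ≠ v → ∀ ε : ℝ, 0 < ε →
    ¬ ForestBCRFeasible P (reduceOne x r u v ε) z

def cutVal [Fintype V] [DecidableEq V] (x : V → V → V → ℝ) (r : V) (U : Finset V) : ℝ :=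
  ∑ u ∈ U, ∑ w ∈ Uᶜ, x r u w

lemma sum_sum_ite [Fintype V] [DecidableEq V] (U W : Finset V) (a b : V) (c : Prop)
    [Decidable c] (ε : ℝ) :
    ∑ u ∈ U, ∑ w ∈ W, (if c ∧ u = a ∧ w = b then ε else 0)
      = if c ∧ a ∈ U ∧ b ∈ W then ε else 0 := by
  by_cases hc : c
  · simp only [hc, true_and]
    simp [ite_and, Finset.sum_ite_eq']
  · simp [hc]

lemma cut_insert [Fintype V] [DecidableEq V] (x : V → V → V → ℝ) (r v : V) (U : Finset V)
    (hv : v ∉ U) :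
    cutVal x r (insert v U) = cutVal x r U - (∑ u ∈ U, x r u v)
      + ∑ w ∈ (insert v U)ᶜ, x r v w := by
  unfold cutVal
  have hvc : v ∈ Uᶜ := Finset.mem_compl.2 hv
  have hcompl : (insert v U)ᶜ = Uᶜ.erase v := Finset.compl_insert
  rw [Finset.sum_insert hv, hcompl]
  have h2 : ∀ u : V, ∑ w ∈ Uᶜ, x r u w = x r u v + ∑ w ∈ Uᶜ.erase v, x r u w := by
    intro u
    rw [← Finset.add_sum_erase _ _ hvc]
  have h3 : ∑ u ∈ U, ∑ w ∈ Uᶜ, x r u w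
      = (∑ u ∈ U, x r u v) + ∑ u ∈ U, ∑ w ∈ Uᶜ.erase v, x r u w := by
    rw [← Finset.sum_add_distrib]
    exact Finset.sum_congr rfl fun u _ => h2 u
  rw [h3]; ring

lemma cut_lb [Fintype V] [DecidableEq V] (x : V → V → V → ℝ)
    (hx0 : ∀ r u w : V, u ≠ w → 0 ≤ x r u w) (r a b : V) (U : Finset V)
    (ha : a ∈ U) (hb : b ∉ U) : x r a b ≤ cutVal x r U := by
  have hbc : b ∈ Uᶜ := Finset.mem_compl.2 hb
  have h1 : x r a b ≤ ∑ w ∈ Uᶜ, x r a w :=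
    Finset.single_le_sum (fun w hw => hx0 r a w (fun h => (Finset.mem_compl.1 hw) (h ▸ ha))) hbc
  have h2 : ∑ w ∈ Uᶜ, x r a w ≤ cutVal x r U :=
    Finset.single_le_sum
      (fun u hu => Finset.sum_nonneg fun w hw => hx0 r u w
        (fun h => (Finset.mem_compl.1 hw) (h ▸ hu))) ha
  linarith

lemma flow_step_in [Fintype V] [DecidableEq V] (P : Finset (Finset V))
    (x : V → V → V → ℝ) (z : V → Finset V → ℝ)
    (hfeas : ForestBCRFeasible P x z) (r v : V) (p : Finset V) (hp : p ∈ P)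
    (U : Finset V) (hrU : r ∉ U) (hrv : r ≠ v) (hvU : v ∉ U)
    (hne : (p ∩ U).Nonempty) (ht : cutVal x r U ≤ z r p) :
    ∑ u ∈ U, x r u v ≤ ∑ w ∈ (insert v U)ᶜ, x r v w := by
  have hrU' : r ∉ insert v U := by
    simp only [Finset.mem_insert, not_or]; exact ⟨hrv, hrU⟩
  have hne' : (p ∩ insert v U).Nonempty :=
    hne.mono (Finset.inter_subset_inter (Finset.Subset.refl p) (Finset.subset_insert v U))
  have hz' : z r p ≤ cutVal x r (insert v U) := hfeas.2.2.2 r p hp _ hrU' hne'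
  rw [cut_insert x r v U hvU] at hz'
  linarith

lemma flow_step_out [Fintype V] [DecidableEq V] (P : Finset (Finset V))
    (x : V → V → V → ℝ) (z : V → Finset V → ℝ)
    (hfeas : ForestBCRFeasible P x z) (r v : V) (p : Finset V) (hp : p ∈ P)
    (hvp : v ∉ p) (U : Finset V) (hrU : r ∉ U) (hvU : v ∈ U)
    (hne : (p ∩ U).Nonempty) (ht : cutVal x r U ≤ z r p) :
    ∑ w ∈ Uᶜ, x r v w ≤ ∑ u ∈ U.erase v, x r u v := by
  have hrU' : r ∉ U.erase v := fun h => hrU (Finset.mem_of_mem_erase h)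
  obtain ⟨y, hy⟩ := hne
  have hy1 : y ∈ p := (Finset.mem_inter.1 hy).1
  have hy2 : y ∈ U := (Finset.mem_inter.1 hy).2
  have hyv : y ≠ v := fun h => hvp (h ▸ hy1)
  have hne' : (p ∩ U.erase v).Nonempty :=
    ⟨y, Finset.mem_inter.2 ⟨hy1, Finset.mem_erase.2 ⟨hyv, hy2⟩⟩⟩
  have hz' : z r p ≤ cutVal x r (U.erase v) := hfeas.2.2.2 r p hp _ hrU' hne'
  have hvU' : v ∉ U.erase v := Finset.notMem_erase v U
  have hkey := cut_insert x r v (U.erase v) hvU'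
  rw [Finset.insert_erase hvU] at hkey
  linarith

lemma tight_cut [Fintype V] [DecidableEq V] (P : Finset (Finset V))
    (x : V → V → V → ℝ) (z : V → Finset V → ℝ)
    (hfeas : ForestBCRFeasible P x z) (hred : FullyReduced P x z)
    (r a b : V) (hab : a ≠ b) (hpos : 0 < x r a b) :
    ∃ p ∈ P, ∃ U : Finset V, r ∉ U ∧ (p ∩ U).Nonempty ∧ a ∈ U ∧ b ∉ U ∧
      cutVal x r U ≤ z r p := by
  classical
  by_contra h
  push_neg at h
  set F : Finset (Finset V × Finset V) :=
    (P ×ˢ Finset.univ.powerset).filter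
      (fun q => r ∉ q.2 ∧ (q.1 ∩ q.2).Nonempty ∧ a ∈ q.2 ∧ b ∉ q.2) with hF
  set Eset : Finset ℝ := insert (x r a b) (F.image fun q => cutVal x r q.2 - z r q.1) with hE
  have hEne : Eset.Nonempty := insert_nonempty _ _
  set ε := Eset.min' hEne with hεdef
  have hεmem : ∀ y ∈ Eset, 0 < y := by
    intro y hy
    rw [hE, mem_insert] at hy
    rcases hy with rfl | hy
    · exact hpos
    · obtain ⟨q, hq, rfl⟩ := mem_image.1 hy
      rw [hF, mem_filter] at hq
      obtain ⟨hqm, h1, h2, h3, h4⟩ := hq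
      have hp := (Finset.mem_product.1 hqm).1
      linarith [h q.1 hp q.2 h1 h2 h3 h4]
  have hε : 0 < ε := hεmem _ (Finset.min'_mem _ _)
  have hεa : ε ≤ x r a b := Finset.min'_le _ _ (mem_insert_self _ _)
  apply hred.2 r a b hab ε hε
  refine ⟨?_, hfeas.2.1, hfeas.2.2.1, ?_⟩
  · intro r' u w huw
    unfold reduceOne
    split_ifs with hc
    · obtain ⟨h1, h2, h3⟩ := hc; subst h1; subst h2; subst h3
      linarith
    · exact hfeas.1 r' u w huw
  · intro r' p hp U hrU hne
    have hkey : ∑ u ∈ U, ∑ w ∈ Uᶜ, reduceOne x r a b ε r' u w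
        = cutVal x r' U - (if r' = r ∧ a ∈ U ∧ b ∈ Uᶜ then ε else 0) := by
      unfold cutVal
      rw [← sum_sum_ite U Uᶜ a b (r' = r) ε, ← Finset.sum_sub_distrib]
      refine Finset.sum_congr rfl fun u hu => ?_
      rw [← Finset.sum_sub_distrib]
      refine Finset.sum_congr rfl fun w hw => ?_
      unfold reduceOne
      split_ifs <;> ring
    rw [hkey]
    split_ifs with hc
    · obtain ⟨hr', hau, hbw⟩ := hc
      rw [hr'] at hrU ⊢
      have hmem : (p, U) ∈ F := by
        rw [hF, mem_filter]
        exact ⟨Finset.mem_product.2 ⟨hp, Finset.mem_powerset.2 (Finset.subset_univ _)⟩,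
          hrU, hne, hau, Finset.mem_compl.1 hbw⟩
      have hle : ε ≤ cutVal x r U - z r p :=
        Finset.min'_le _ _ (mem_insert_of_mem (mem_image_of_mem _ hmem))
      linarith
    · have := hfeas.2.2.2 r' p hp U hrU hne
      simpa [cutVal] using this

lemma splitOff_eq [DecidableEq V] (x : V → V → V → ℝ) (r u v w : V) (ε : ℝ)
    (r' a b : V) :
    splitOff x r u v w ε r' a b
      = x r' a b + (if r' = r ∧ a = u ∧ b = w then ε else 0)
        - (if r' = r ∧ a = u ∧ b = v then ε else 0)
        - (if r' = r ∧ a = v ∧ b = w then ε else 0) := by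
  unfold splitOff
  by_cases hr' : r' = r
  · simp [hr']
  · simp [hr']

lemma tight_cut_split [Fintype V] [DecidableEq V] (P : Finset (Finset V))
    (x : V → V → V → ℝ) (z : V → Finset V → ℝ)
    (hfeas : ForestBCRFeasible P x z) (hred : FullyReduced P x z)
    (r u v w : V) (huv : u ≠ v) (hvw : v ≠ w) (huw : u ≠ w)
    (h1 : 0 < x r u v) (h2 : 0 < x r v w) :
    ∃ p ∈ P, ∃ U : Finset V, r ∉ U ∧ (p ∩ U).Nonempty ∧
      ((u ∈ U ∧ v ∉ U ∧ w ∈ U) ∨ (u ∉ U ∧ v ∈ U ∧ w ∉ U)) ∧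
      cutVal x r U ≤ z r p := by
  classical
  by_contra h
  push_neg at h
  set F : Finset (Finset V × Finset V) :=
    (P ×ˢ Finset.univ.powerset).filter
      (fun q => r ∉ q.2 ∧ (q.1 ∩ q.2).Nonempty ∧
        ((u ∈ q.2 ∧ v ∉ q.2 ∧ w ∈ q.2) ∨ (u ∉ q.2 ∧ v ∈ q.2 ∧ w ∉ q.2))) with hF
  set Eset : Finset ℝ :=
    insert (x r u v) (insert (x r v w)
      (F.image fun q => cutVal x r q.2 - z r q.1)) with hE
  have hEne : Eset.Nonempty := insert_nonempty _ _
  set ε := Eset.min' hEne with hεdef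
  have hεmem : ∀ y ∈ Eset, 0 < y := by
    intro y hy
    rw [hE, mem_insert, mem_insert] at hy
    rcases hy with rfl | rfl | hy
    · exact h1
    · exact h2
    · obtain ⟨q, hq, rfl⟩ := mem_image.1 hy
      rw [hF, mem_filter] at hq
      obtain ⟨hqm, ha1, ha2, ha3⟩ := hq
      have hp := (Finset.mem_product.1 hqm).1
      linarith [h q.1 hp q.2 ha1 ha2 ha3]
  have hε : 0 < ε := hεmem _ (Finset.min'_mem _ _)
  have hεuv : ε ≤ x r u v := Finset.min'_le _ _ (mem_insert_self _ _)
  have hεvw : ε ≤ x r v w :=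
    Finset.min'_le _ _ (mem_insert_of_mem (mem_insert_self _ _))
  apply hred.1.2 r u v w huv hvw huw ε hε
  refine ⟨?_, hfeas.2.1, hfeas.2.2.1, ?_⟩
  · -- nonnegativity
    intro r' a b hab
    have base := hfeas.1 r' a b hab
    rw [splitOff_eq]
    by_cases hB : r' = r ∧ a = u ∧ b = v
    · have hc1 : ¬(r' = r ∧ a = u ∧ b = w) := fun hc => hvw (hB.2.2.symm.trans hc.2.2)
      have hc3 : ¬(r' = r ∧ a = v ∧ b = w) := fun hc => huv (hB.2.1.symm.trans hc.2.1)
      rw [if_neg hc1, if_pos hB, if_neg hc3]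
      have hxab : x r' a b = x r u v := by rw [hB.1, hB.2.1, hB.2.2]
      linarith
    · by_cases hC : r' = r ∧ a = v ∧ b = w
      · have hc1 : ¬(r' = r ∧ a = u ∧ b = w) := fun hc => huv (hc.2.1.symm.trans hC.2.1)
        have hc2 : ¬(r' = r ∧ a = u ∧ b = v) := fun hc => huv (hc.2.1.symm.trans hC.2.1)
        rw [if_neg hc1, if_neg hc2, if_pos hC]
        have hxab : x r' a b = x r v w := by rw [hC.1, hC.2.1, hC.2.2]
        linarith
      · rw [if_neg hB, if_neg hC]
        split_ifs <;> linarith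
  · -- cut constraints
    intro r' p hp U hrU hne
    have hz : z r' p ≤ cutVal x r' U := hfeas.2.2.2 r' p hp U hrU hne
    have hkey : ∑ a ∈ U, ∑ b ∈ Uᶜ, splitOff x r u v w ε r' a b
        = cutVal x r' U + (if r' = r ∧ u ∈ U ∧ w ∈ Uᶜ then ε else 0)
          - (if r' = r ∧ u ∈ U ∧ v ∈ Uᶜ then ε else 0)
          - (if r' = r ∧ v ∈ U ∧ w ∈ Uᶜ then ε else 0) := by
      unfold cutVal
      rw [← sum_sum_ite U Uᶜ u w (r' = r) ε, ← sum_sum_ite U Uᶜ u v (r' = r) ε,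
        ← sum_sum_ite U Uᶜ v w (r' = r) ε]
      rw [← Finset.sum_add_distrib, ← Finset.sum_sub_distrib, ← Finset.sum_sub_distrib]
      refine Finset.sum_congr rfl fun a ha => ?_
      rw [← Finset.sum_add_distrib, ← Finset.sum_sub_distrib, ← Finset.sum_sub_distrib]
      exact Finset.sum_congr rfl fun b hb => splitOff_eq x r u v w ε r' a b
    rw [hkey]
    simp only [Finset.mem_compl]
    by_cases hr' : r' = r
    · subst hr'
      by_cases hpat : (u ∈ U ∧ v ∉ U ∧ w ∈ U) ∨ (u ∉ U ∧ v ∈ U ∧ w ∉ U)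
      · have hmem : (p, U) ∈ F := by
          rw [hF, mem_filter]
          exact ⟨Finset.mem_product.2 ⟨hp, Finset.mem_powerset.2 (Finset.subset_univ _)⟩,
            hrU, hne, hpat⟩
        have hle : ε ≤ cutVal x r' U - z r' p :=
          Finset.min'_le _ _
            (mem_insert_of_mem (mem_insert_of_mem (mem_image_of_mem _ hmem)))
        rcases hpat with ⟨hu, hv', hw⟩ | ⟨hu, hv', hw⟩
        · rw [if_neg (by tauto), if_pos (by tauto), if_neg (by tauto)]
          linarith
        · rw [if_neg (by tauto), if_neg (by tauto), if_pos (by tauto)]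
          linarith
      · split_ifs <;> first
          | linarith
          | (exfalso; tauto)
    · rw [if_neg (by tauto), if_neg (by tauto), if_neg (by tauto)]
      linarith

lemma half_pos' {y : ℝ} (h : ∃ n : ℤ, y = n / 2) (hy : 0 < y) : 1 / 2 ≤ y := by
  obtain ⟨n, rfl⟩ := h
  have h0 : (0 : ℝ) < n := by linarith
  have h1 : (1 : ℤ) ≤ n := by exact_mod_cast h0
  have h2 : (1 : ℝ) ≤ n := by exact_mod_cast h1
  linarith

lemma single_pos [DecidableEq V] {s : Finset V} {f : V → ℝ}
    (h0 : ∀ w ∈ s, 0 ≤ f w) (hh : ∀ w ∈ s, ∃ n : ℤ, f w = n / 2)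
    (hlt : ∑ w ∈ s, f w < 1) (hpos : 0 < ∑ w ∈ s, f w) :
    ∃ a ∈ s, 0 < f a ∧ ∀ w ∈ s, w ≠ a → f w = 0 := by
  have : ∑ w ∈ s, (0 : ℝ) < ∑ w ∈ s, f w := by simpa using hpos
  obtain ⟨a, ha, hfa⟩ := Finset.exists_lt_of_sum_lt this
  refine ⟨a, ha, hfa, ?_⟩
  intro w hw hwa
  by_contra hne
  have hfw : 0 < f w := lt_of_le_of_ne (h0 w hw) (Ne.symm hne)
  have h1 : 1 / 2 ≤ f a := half_pos' (hh a ha) hfa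
  have h2 : 1 / 2 ≤ f w := half_pos' (hh w hw) hfw
  have hsub : {a, w} ⊆ s := by
    intro y hy
    rcases Finset.mem_insert.1 hy with rfl | hy
    · exact ha
    · exact (Finset.mem_singleton.1 hy) ▸ hw
  have hsum : ∑ y ∈ ({a, w} : Finset V), f y ≤ ∑ y ∈ s, f y :=
    Finset.sum_le_sum_of_subset_of_nonneg hsub (fun y hy _ => h0 y hy)
  rw [Finset.sum_pair (Ne.symm hwa)] at hsum
  linarith

lemma main_in [Fintype V] [DecidableEq V] (P : Finset (Finset V))
    (x : V → V → V → ℝ) (z : V → Finset V → ℝ)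
    (hfeas : ForestBCRFeasible P x z) (hred : FullyReduced P x z)
    (v : V) (hv : v ∉ terminals P) (r a : V) (ha : a ≠ v) (hpos : 0 < x r a v) :
    x r a v ≤ ∑ w ∈ Finset.univ.erase v, x r v w := by
  obtain ⟨p, hp, U, hrU, hne, haU, hvU, ht⟩ :=
    tight_cut P x z hfeas hred r a v ha hpos
  have hrv : r ≠ v := by
    intro hrv'
    have hz0 : z r p = 0 := hred.1.1 r (by rw [hrv']; exact hv) p hp
    have hcl := cut_lb x hfeas.1 r a v U haU hvU
    linarith
  have hstep := flow_step_in P x z hfeas r v p hp U hrU hrv hvU hne ht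
  have h1 : x r a v ≤ ∑ u ∈ U, x r u v :=
    Finset.single_le_sum
      (fun u hu => hfeas.1 r u v (fun h => hvU (h ▸ hu))) haU
  have h2 : ∑ w ∈ (insert v U)ᶜ, x r v w ≤ ∑ w ∈ Finset.univ.erase v, x r v w := by
    apply Finset.sum_le_sum_of_subset_of_nonneg
    · intro w hw
      refine Finset.mem_erase.2 ⟨?_, Finset.mem_univ w⟩
      intro hwv
      exact (Finset.mem_compl.1 hw) (hwv ▸ Finset.mem_insert_self v U)
    · intro w hw _
      exact hfeas.1 r v w (Ne.symm (Finset.ne_of_mem_erase hw))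
  linarith

lemma main_out [Fintype V] [DecidableEq V] (P : Finset (Finset V))
    (x : V → V → V → ℝ) (z : V → Finset V → ℝ)
    (hfeas : ForestBCRFeasible P x z) (hred : FullyReduced P x z)
    (v : V) (hv : v ∉ terminals P) (r b : V) (hb : b ≠ v) (hpos : 0 < x r v b) :
    x r v b ≤ ∑ w ∈ Finset.univ.erase v, x r w v := by
  have hvb : v ≠ b := Ne.symm hb
  obtain ⟨p, hp, U, hrU, hne, hvU, hbU, ht⟩ :=
    tight_cut P x z hfeas hred r v b hvb hpos
  have hvp : v ∉ p := by
    intro hvp'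
    exact hv (Finset.mem_filter.2 ⟨Finset.mem_univ v, ⟨p, hp, hvp'⟩⟩)
  have hstep := flow_step_out P x z hfeas r v p hp hvp U hrU hvU hne ht
  have h1 : x r v b ≤ ∑ w ∈ Uᶜ, x r v w :=
    Finset.single_le_sum
      (fun w hw => hfeas.1 r v w (fun h => (Finset.mem_compl.1 hw) (h ▸ hvU)))
      (Finset.mem_compl.2 hbU)
  have h2 : ∑ u ∈ U.erase v, x r u v ≤ ∑ w ∈ Finset.univ.erase v, x r w v := by
    apply Finset.sum_le_sum_of_subset_of_nonneg
    · exact Finset.erase_subset_erase v (Finset.subset_univ U)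
    · intro u hu _
      exact hfeas.1 r u v (Finset.ne_of_mem_erase hu)
  linarith

/-- In a feasible, half-integral, fully reduced well structured
Forest-BCR solution, every Steiner (non-terminal) support vertex `v` has total
incident `x`-value at least `3/2`. -/
theorem steiner_support_vertex_high_degree [Fintype V] [DecidableEq V]
    (P : Finset (Finset V)) (hP : ∀ p ∈ P, p.card = 2)
    (x : V → V → V → ℝ) (z : V → Finset V → ℝ)
    (hfeas : ForestBCRFeasible P x z)
    (hhalf : HalfIntegralSol P x z)
    (hred : FullyReduced P x z)
    (v : V) (hv : v ∉ terminals P)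
    (hsupp : 0 < ∑ r : V, ((∑ w ∈ Finset.univ.erase v, x r v w) +
      ∑ w ∈ Finset.univ.erase v, x r w v)) :
    (3 / 2 : ℝ) ≤ ∑ r : V, ((∑ w ∈ Finset.univ.erase v, x r v w) +
      ∑ w ∈ Finset.univ.erase v, x r w v) := by
  classical
  by_contra hlt
  push_neg at hlt
  have hout0 : ∀ r : V, 0 ≤ ∑ w ∈ Finset.univ.erase v, x r v w := fun r =>
    Finset.sum_nonneg fun w hw => hfeas.1 r v w (Ne.symm (Finset.ne_of_mem_erase hw))
  have hinn0 : ∀ r : V, 0 ≤ ∑ w ∈ Finset.univ.erase v, x r w v := fun r =>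
    Finset.sum_nonneg fun w hw => hfeas.1 r w v (Finset.ne_of_mem_erase hw)
  have claim : ∀ r : V,
      0 < (∑ w ∈ Finset.univ.erase v, x r v w) + ∑ w ∈ Finset.univ.erase v, x r w v →
      1 / 2 ≤ (∑ w ∈ Finset.univ.erase v, x r v w) ∧
        1 / 2 ≤ ∑ w ∈ Finset.univ.erase v, x r w v := by
    intro r hr
    have hdisj : 0 < (∑ w ∈ Finset.univ.erase v, x r v w) ∨
        0 < ∑ w ∈ Finset.univ.erase v, x r w v := by
      by_contra hcon
      push_neg at hcon
      linarith [hcon.1, hcon.2]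
    rcases hdisj with hO | hI
    · obtain ⟨b, hb, hfb⟩ := Finset.exists_lt_of_sum_lt
        (show (∑ w ∈ Finset.univ.erase v, (0 : ℝ)) <
          ∑ w ∈ Finset.univ.erase v, x r v w by simpa using hO)
      have hbv : b ≠ v := Finset.ne_of_mem_erase hb
      have hhalfb : 1 / 2 ≤ x r v b := half_pos' (hhalf.1 r v b (Ne.symm hbv)) hfb
      have h1 : x r v b ≤ ∑ w ∈ Finset.univ.erase v, x r v w :=
        Finset.single_le_sum
          (fun w hw => hfeas.1 r v w (Ne.symm (Finset.ne_of_mem_erase hw))) hb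
      have h2 := main_out P x z hfeas hred v hv r b hbv hfb
      exact ⟨le_trans hhalfb h1, le_trans hhalfb h2⟩
    · obtain ⟨a, ha, hfa⟩ := Finset.exists_lt_of_sum_lt
        (show (∑ w ∈ Finset.univ.erase v, (0 : ℝ)) <
          ∑ w ∈ Finset.univ.erase v, x r w v by simpa using hI)
      have hav : a ≠ v := Finset.ne_of_mem_erase ha
      have hhalfa : 1 / 2 ≤ x r a v := half_pos' (hhalf.1 r a v hav) hfa
      have h1 : x r a v ≤ ∑ w ∈ Finset.univ.erase v, x r w v :=
        Finset.single_le_sum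
          (fun w hw => hfeas.1 r w v (Finset.ne_of_mem_erase hw)) ha
      have h2 := main_in P x z hfeas hred v hv r a hav hfa
      exact ⟨le_trans hhalfa h2, le_trans hhalfa h1⟩
  obtain ⟨r0, _, hr0⟩ := Finset.exists_lt_of_sum_lt
    (show (∑ r : V, (0 : ℝ)) < ∑ r : V, ((∑ w ∈ Finset.univ.erase v, x r v w) +
      ∑ w ∈ Finset.univ.erase v, x r w v) by simpa using hsupp)
  have hone : ∀ r' : V, r' ≠ r0 →
      (∑ w ∈ Finset.univ.erase v, x r' v w) + ∑ w ∈ Finset.univ.erase v, x r' w v = 0 := by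
    intro r' hr'
    by_contra hne
    have hpos' : 0 < (∑ w ∈ Finset.univ.erase v, x r' v w) +
        ∑ w ∈ Finset.univ.erase v, x r' w v :=
      lt_of_le_of_ne (add_nonneg (hout0 r') (hinn0 r')) (Ne.symm hne)
    have c1 := claim r0 hr0
    have c2 := claim r' hpos'
    have hs : ∑ r ∈ ({r0, r'} : Finset V), ((∑ w ∈ Finset.univ.erase v, x r v w) +
        ∑ w ∈ Finset.univ.erase v, x r w v) ≤
        ∑ r : V, ((∑ w ∈ Finset.univ.erase v, x r v w) +
        ∑ w ∈ Finset.univ.erase v, x r w v) :=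
      Finset.sum_le_sum_of_subset_of_nonneg (Finset.subset_univ _)
        (fun y _ _ => add_nonneg (hout0 y) (hinn0 y))
    rw [Finset.sum_pair (Ne.symm hr')] at hs
    linarith [c1.1, c1.2, c2.1, c2.2]
  have htot : (∑ r : V, ((∑ w ∈ Finset.univ.erase v, x r v w) +
      ∑ w ∈ Finset.univ.erase v, x r w v))
      = (∑ w ∈ Finset.univ.erase v, x r0 v w) + ∑ w ∈ Finset.univ.erase v, x r0 w v :=
    Finset.sum_eq_single r0 (fun b _ hb => hone b hb)
      (fun h => absurd (Finset.mem_univ r0) h)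
  rw [htot] at hlt
  obtain ⟨cO, cI⟩ := claim r0 hr0
  have houtlt : ∑ w ∈ Finset.univ.erase v, x r0 v w < 1 := by linarith
  have hinnlt : ∑ w ∈ Finset.univ.erase v, x r0 w v < 1 := by linarith
  obtain ⟨b, hb, hxb, hbzero⟩ := single_pos (f := fun w => x r0 v w)
    (fun w hw => hfeas.1 r0 v w (Ne.symm (Finset.ne_of_mem_erase hw)))
    (fun w hw => hhalf.1 r0 v w (Ne.symm (Finset.ne_of_mem_erase hw)))
    houtlt (by linarith)
  obtain ⟨a, ha, hxa, hazero⟩ := single_pos (f := fun w => x r0 w v)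
    (fun w hw => hfeas.1 r0 w v (Finset.ne_of_mem_erase hw))
    (fun w hw => hhalf.1 r0 w v (Finset.ne_of_mem_erase hw))
    hinnlt (by linarith)
  have hav : a ≠ v := Finset.ne_of_mem_erase ha
  have hbv : b ≠ v := Finset.ne_of_mem_erase hb
  have hbzero' : ∀ w : V, w ≠ v → w ≠ b → x r0 v w = 0 := fun w hwv hwb =>
    hbzero w (Finset.mem_erase.2 ⟨hwv, Finset.mem_univ w⟩) hwb
  have hazero' : ∀ w : V, w ≠ v → w ≠ a → x r0 w v = 0 := fun w hwv hwa =>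
    hazero w (Finset.mem_erase.2 ⟨hwv, Finset.mem_univ w⟩) hwa
  have hvp : ∀ p ∈ P, v ∉ p := fun p hp hvp' =>
    hv (Finset.mem_filter.2 ⟨Finset.mem_univ v, p, hp, hvp'⟩)
  by_cases hab : a = b
  · obtain ⟨p, hp, U, hrU, hne, haU, hvU, ht⟩ :=
      tight_cut P x z hfeas hred r0 a v hav hxa
    have hrv : r0 ≠ v := by
      intro hrv'
      have hz0 : z r0 p = 0 := hred.1.1 r0 (by rw [hrv']; exact hv) p hp
      have hcl := cut_lb x hfeas.1 r0 a v U haU hvU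
      linarith
    have hstep := flow_step_in P x z hfeas r0 v p hp U hrU hrv hvU hne ht
    have h1 : x r0 a v ≤ ∑ u ∈ U, x r0 u v :=
      Finset.single_le_sum (fun u hu => hfeas.1 r0 u v (fun h => hvU (h ▸ hu))) haU
    have h2 : ∑ w ∈ (insert v U)ᶜ, x r0 v w = 0 := by
      refine Finset.sum_eq_zero fun w hw => ?_
      have hwv : w ≠ v := fun h => (Finset.mem_compl.1 hw) (h ▸ Finset.mem_insert_self v U)
      have hwb : w ≠ b := fun h => (Finset.mem_compl.1 hw)
        (h ▸ Finset.mem_insert_of_mem (hab ▸ haU))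
      exact hbzero' w hwv hwb
    linarith
  · obtain ⟨p, hp, U, hrU, hne, hpat, ht⟩ :=
      tight_cut_split P x z hfeas hred r0 a v b hav (Ne.symm hbv) hab hxa hxb
    rcases hpat with ⟨haU, hvU, hbU⟩ | ⟨haU, hvU, hbU⟩
    · have hrv : r0 ≠ v := by
        intro hrv'
        have hz0 : z r0 p = 0 := hred.1.1 r0 (by rw [hrv']; exact hv) p hp
        have hcl := cut_lb x hfeas.1 r0 a v U haU hvU
        linarith
      have hstep := flow_step_in P x z hfeas r0 v p hp U hrU hrv hvU hne ht
      have h1 : x r0 a v ≤ ∑ u ∈ U, x r0 u v :=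
        Finset.single_le_sum (fun u hu => hfeas.1 r0 u v (fun h => hvU (h ▸ hu))) haU
      have h2 : ∑ w ∈ (insert v U)ᶜ, x r0 v w = 0 := by
        refine Finset.sum_eq_zero fun w hw => ?_
        have hwv : w ≠ v := fun h => (Finset.mem_compl.1 hw) (h ▸ Finset.mem_insert_self v U)
        have hwb : w ≠ b := fun h => (Finset.mem_compl.1 hw)
          (h ▸ Finset.mem_insert_of_mem hbU)
        exact hbzero' w hwv hwb
      linarith
    · have hstep := flow_step_out P x z hfeas r0 v p hp (hvp p hp) U hrU hvU hne ht
      have h1 : x r0 v b ≤ ∑ w ∈ Uᶜ, x r0 v w :=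
        Finset.single_le_sum
          (fun w hw => hfeas.1 r0 v w (fun h => (Finset.mem_compl.1 hw) (h ▸ hvU)))
          (Finset.mem_compl.2 hbU)
      have h2 : ∑ u ∈ U.erase v, x r0 u v = 0 := by
        refine Finset.sum_eq_zero fun u hu => ?_
        exact hazero' u (Finset.ne_of_mem_erase hu)
          (fun h => haU (h ▸ Finset.mem_of_mem_erase hu))
      linarith
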